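/- Let K be a field of characteristic zero, G ∈ K[[z]][t], and f ∈ K[[z]] with f'² = G(z, f) and f'(0) ≠ 0. Let s ≥ 2 be an integer and let f₁ ∈ K[[z]] satisfy f₁ ≡ f mod z^s. If f₂ ∈ K[[z]] has f₂(0) = 0 and satisfies 2·f₁'·f₂' − G_t(z, f₁)·f₂ ≡ G(z, f₁) − f₁'² mod z^{2s−2}, then f₁ + f₂ ≡ f mod z^{2s−1}. In other words, one Newton step for the equation f'² = G(z, f) passes from precision s to precision 2s−1. -/

import Mathlib

open PowerSeries

private lemma coeff_mul_vanish {K : Type*} [CommRing K] {a b : PowerSeries K} {m n : ℕ}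
    (ha : ∀ i < m, coeff i a = 0) (hb : ∀ i < n, coeff i b = 0) :
    ∀ j < m + n, coeff j (a * b) = 0 := by
  intro j hj
  rw [coeff_mul]
  apply Finset.sum_eq_zero
  rintro ⟨i, k⟩ hp
  rw [Finset.HasAntidiagonal.mem_antidiagonal] at hp
  rcases lt_or_ge i m with h | h
  · rw [ha i h, zero_mul]
  · rw [hb k (by omega), mul_zero]

theorem newton_step_doubles_precision {K : Type*} [Field K] [CharZero K]
    (G : Polynomial (PowerSeries K)) (f f₁ f₂ : PowerSeries K) (s : ℕ) (hs : 2 ≤ s)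
    (hode : (d⁄dX K f) ^ 2 = Polynomial.eval f G)
    (hf1 : coeff 1 f ≠ 0)
    (h1 : ∀ j < s, coeff j f₁ = coeff j f)
    (h20 : constantCoeff f₂ = 0)
    (h2 : ∀ j < 2 * s - 2,
      coeff j (2 * d⁄dX K f₁ * d⁄dX K f₂ - Polynomial.eval f₁ (Polynomial.derivative G) * f₂)
        = coeff j (Polynomial.eval f₁ G - (d⁄dX K f₁) ^ 2)) :
    ∀ j < 2 * s - 1, coeff j (f₁ + f₂) = coeff j f := by
  obtain ⟨e, he_def⟩ : ∃ e : PowerSeries K, e = f - f₁ := ⟨_, rfl⟩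
  have he : ∀ j < s, coeff j e = 0 := by
    intro j hj; simp [he_def, h1 j hj]
  have he' : ∀ j < s - 1, coeff j (d⁄dX K e) = 0 := by
    intro j hj
    rw [coeff_derivative, he (j+1) (by omega), zero_mul]
  obtain ⟨q, hq⟩ := Polynomial.binomExpansion G f₁ e
  have hfe : f₁ + e = f := by rw [he_def]; ring
  rw [hfe] at hq
  have hde : d⁄dX K f = d⁄dX K f₁ + d⁄dX K e := by
    rw [← map_add]; congr 1; rw [he_def]; ring
  obtain ⟨g, hg_def⟩ : ∃ g : PowerSeries K, g = e - f₂ := ⟨_, rfl⟩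
  have hkey : ∀ j < 2 * s - 2,
      coeff j (2 * d⁄dX K f₁ * d⁄dX K g - Polynomial.eval f₁ (Polynomial.derivative G) * g)
        = 0 := by
    intro j hj
    have expand :
        2 * d⁄dX K f₁ * d⁄dX K g - Polynomial.eval f₁ (Polynomial.derivative G) * g
          = (q * e ^ 2 - (d⁄dX K e) ^ 2)
            + ((Polynomial.eval f₁ G - (d⁄dX K f₁) ^ 2)
              - (2 * d⁄dX K f₁ * d⁄dX K f₂
                  - Polynomial.eval f₁ (Polynomial.derivative G) * f₂)) := by
      have h1' : Polynomial.eval f₁ G - (d⁄dX K f₁)^2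
          = (d⁄dX K f)^2 - (d⁄dX K f₁)^2 - Polynomial.eval f₁ (Polynomial.derivative G) * e
            - q * e^2 := by
        rw [hode, hq]; ring
      rw [hg_def, map_sub, h1', hde]; ring
    have hz1 : coeff j (q * e ^ 2) = 0 := by
      have : ∀ i < 0 + (s + s), coeff i (q * (e * e)) = 0 :=
        coeff_mul_vanish (fun i hi => absurd hi (Nat.not_lt_zero i))
          (coeff_mul_vanish he he)
      rw [sq]; exact this j (by omega)
    have hz2 : coeff j ((d⁄dX K e) ^ 2) = 0 := by
      rw [sq]
      exact coeff_mul_vanish he' he' j (by omega)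
    rw [expand, map_add, map_sub, map_sub, hz1, hz2, h2 j hj, sub_self, sub_self, add_zero]
  have hlead : coeff 1 f₁ ≠ 0 := by
    rw [h1 1 (by omega)]; exact hf1
  have hg : ∀ m, m < 2 * s - 1 → coeff m g = 0 := by
    intro m
    induction m using Nat.strong_induction_on with
    | _ m ih =>
      intro hm
      match m with
      | 0 =>
        have he0 : coeff 0 e = 0 := he 0 (by omega)
        rw [hg_def, map_sub, he0, coeff_zero_eq_constantCoeff, h20, sub_zero]
      | (k+1) =>
        have hk := hkey k (by omega)
        rw [map_sub] at hk
        have hGg : coeff k (Polynomial.eval f₁ (Polynomial.derivative G) * g) = 0 := by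
          rw [coeff_mul]
          apply Finset.sum_eq_zero
          rintro ⟨i, l⟩ hp
          rw [Finset.HasAntidiagonal.mem_antidiagonal] at hp
          rw [ih l (by omega) (by omega), mul_zero]
        have hmain : coeff k (2 * d⁄dX K f₁ * d⁄dX K g)
            = 2 * (coeff 1 f₁ * (coeff (k+1) g * (k+1))) := by
          rw [mul_assoc,
            show (2 : PowerSeries K) = C (2 : K) from by simp [← map_ofNat (C (R := K)) 2],
            coeff_C_mul, coeff_mul]
          congr 1
          rw [Finset.sum_eq_single (0, k)]
          · dsimp only
            simp only [coeff_derivative]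
            push_cast
            ring
          · rintro ⟨i, l⟩ hp hne
            rw [Finset.HasAntidiagonal.mem_antidiagonal] at hp
            dsimp only at hp ⊢
            have hl : l < k := by
              rcases Nat.lt_or_ge l k with h | h
              · exact h
              · exfalso; apply hne
                have : l = k := by omega
                subst this
                have : i = 0 := by omega
                subst this; rfl
            simp only [coeff_derivative]
            rw [ih (l+1) (by omega) (by omega), zero_mul, mul_zero]
          · intro h; exact absurd (Finset.HasAntidiagonal.mem_antidiagonal.2 (by omega)) h
        rw [hGg, sub_zero, hmain] at hk
        have h2ne : (2 : K) ≠ 0 := two_ne_zero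
        have hkne : ((k : K) + 1) ≠ 0 := Nat.cast_add_one_ne_zero k
        rcases mul_eq_zero.mp hk with h | h
        · exact absurd h h2ne
        rcases mul_eq_zero.mp h with h | h
        · exact absurd h hlead
        rcases mul_eq_zero.mp h with h | h
        · exact h
        · exact absurd h hkne
  intro j hj
  have hgj : coeff j e - coeff j f₂ = 0 := by
    rw [← map_sub, ← hg_def]; exact hg j hj
  have hej : coeff j e = coeff j f - coeff j f₁ := by simp [he_def]
  rw [map_add]
  linear_combination hej - hgj
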